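/- Suppose ω e^β ≠ α and α e^β ≠ ω e^γ. Then for every t > 0, (α − ω e^β)(α e^β − ω e^γ)·(F₁(t) − F₂(t)) = α·[ω(e^{2β} − e^γ)·exp(−α(e^β + 1)t) + (ω e^γ − α e^β)·exp(−e^β(α + ω)t) + e^β(α − ω e^β)·exp(−(α + ω e^γ)t)]. In particular, the sign of the risk difference F₁(t) − F₂(t) equals the sign of the right-hand bracketed expression divided by (α − ω e^β)(α e^β − ω e^γ). -/

import Mathlib

open Real

/-- Infection probability at time `t` of subject 1 (covariate `x = 1`) in the
two-person-cluster susceptible–infective model. -/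
noncomputable def F₁ (α ω β : ℝ) (t : ℝ) : ℝ :=
  α * ∫ s in (0:ℝ)..t,
    (exp β + 1 - exp (-(exp β * (α + ω)) * (t - s))) * exp (-(α * (exp β + 1)) * s)

/-- Infection probability at time `t` of subject 2 (covariate `x = 0`) in the
two-person-cluster susceptible–infective model. -/
noncomputable def F₂ (α ω β γ : ℝ) (t : ℝ) : ℝ :=
  α * ∫ s in (0:ℝ)..t,
    (exp β + 1 - exp β * exp (-(α + ω * exp γ) * (t - s))) * exp (-(α * (exp β + 1)) * s)

lemma int_exp_mul (c t : ℝ) (hc : c ≠ 0) :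
    ∫ s in (0:ℝ)..t, exp (c * s) = (exp (c * t) - 1) / c := by
  rw [intervalIntegral.integral_comp_mul_left (fun x => exp x) hc]
  simp [integral_exp, div_eq_inv_mul]

lemma split_integral (A B k m t : ℝ) (hA : A ≠ 0) (hBA : B - A ≠ 0) :
    ∫ s in (0:ℝ)..t, (k - m * exp (-B * (t - s))) * exp (-A * s)
      = k * ((exp (-A * t) - 1) / (-A))
        - m * ((exp (-A * t) - exp (-B * t)) / (B - A)) := by
  have hcong : ∀ s ∈ Set.uIcc (0:ℝ) t,
      (k - m * exp (-B * (t - s))) * exp (-A * s)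
        = k * exp (-A * s) - m * exp (-B * t) * exp ((B - A) * s) := by
    intro s _
    have h : exp (-B * (t - s)) * exp (-A * s) = exp (-B * t) * exp ((B - A) * s) := by
      rw [← exp_add, ← exp_add]; congr 1; ring
    linear_combination (-m) * h
  rw [intervalIntegral.integral_congr hcong, intervalIntegral.integral_sub
      ((Continuous.intervalIntegrable (by fun_prop) _ _)) ((Continuous.intervalIntegrable (by fun_prop) _ _)), intervalIntegral.integral_const_mul,
      intervalIntegral.integral_const_mul,
      int_exp_mul (-A) t (by simpa using hA), int_exp_mul (B - A) t hBA]
  have h2 : exp (-B * t) * exp ((B - A) * t) = exp (-A * t) := by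
    rw [← exp_add]; congr 1; ring
  field_simp
  ring_nf
  ring_nf at h2
  have h3 : exp (-(t * B)) * exp (-(A * t) + t * B) = exp (-(A * t)) := by
    rw [← exp_add]; congr 1; ring
  linear_combination (-A * m) * h3

theorem risk_difference_formula (α ω β γ : ℝ) (hα : 0 < α) (hω : 0 ≤ ω)
    (hne₁ : ω * exp β ≠ α) (hne₂ : α * exp β ≠ ω * exp γ) :
    ∀ t : ℝ, 0 < t →
      (α - ω * exp β) * (α * exp β - ω * exp γ) * (F₁ α ω β t - F₂ α ω β γ t) =
        α * (ω * (exp (2 * β) - exp γ) * exp (-(α * (exp β + 1)) * t)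
          + (ω * exp γ - α * exp β) * exp (-(exp β * (α + ω)) * t)
          + exp β * (α - ω * exp β) * exp (-(α + ω * exp γ) * t)) := by
  intro t ht
  set A : ℝ := α * (exp β + 1) with hAdef
  set B : ℝ := exp β * (α + ω) with hBdef
  set C : ℝ := α + ω * exp γ with hCdef
  have hA : A ≠ 0 := by positivity
  have hBA : B - A ≠ 0 := by
    have : B - A = ω * exp β - α := by rw [hBdef, hAdef]; ring
    rw [this]; exact sub_ne_zero.mpr hne₁
  have hCA : C - A ≠ 0 := by
    have : C - A = ω * exp γ - α * exp β := by rw [hCdef, hAdef]; ring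
    rw [this]; exact sub_ne_zero.mpr (Ne.symm hne₂)
  have h1 : F₁ α ω β t = α * ((exp β + 1) * ((exp (-A * t) - 1) / (-A))
      - 1 * ((exp (-A * t) - exp (-B * t)) / (B - A))) := by
    rw [F₁, show (∫ s in (0:ℝ)..t,
        (exp β + 1 - exp (-(exp β * (α + ω)) * (t - s))) * exp (-(α * (exp β + 1)) * s))
        = ∫ s in (0:ℝ)..t, (exp β + 1 - 1 * exp (-B * (t - s))) * exp (-A * s) by
      simp [hBdef, hAdef]]
    rw [split_integral A B (exp β + 1) 1 t hA hBA]
  have h2 : F₂ α ω β γ t = α * ((exp β + 1) * ((exp (-A * t) - 1) / (-A))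
      - exp β * ((exp (-A * t) - exp (-C * t)) / (C - A))) := by
    rw [F₂, show (∫ s in (0:ℝ)..t,
        (exp β + 1 - exp β * exp (-(α + ω * exp γ) * (t - s))) * exp (-(α * (exp β + 1)) * s))
        = ∫ s in (0:ℝ)..t, (exp β + 1 - exp β * exp (-C * (t - s))) * exp (-A * s) by
      simp [hCdef, hAdef]]
    rw [split_integral A C (exp β + 1) (exp β) t hA hCA]
  rw [h1, h2]
  have e1 : exp (2 * β) = exp β * exp β := by rw [two_mul, exp_add]
  have e2 : -(α * (exp β + 1)) * t = -A * t := by rw [hAdef]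
  have e3 : -(exp β * (α + ω)) * t = -B * t := by rw [hBdef]
  have e4 : -(α + ω * exp γ) * t = -C * t := by rw [hCdef]
  rw [e1, e2, e3, e4]
  have hBA' : B - A = ω * exp β - α := by rw [hBdef, hAdef]; ring
  have hCA' : C - A = ω * exp γ - α * exp β := by rw [hCdef, hAdef]; ring
  field_simp
  rw [hBA', hCA']
  ring
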